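/- Let 0 < μ < 1/m_φ and assume F attains a finite minimal value F* with nonempty minimizer set argmin F. Then argmin F_μ is nonempty, min_{z∈ℝⁿ} F_μ(z) = F*, and if z ∈ argmin F_μ then x_{μφ}(z) ∈ argmin F; conversely, if x ∈ argmin F then there exists z ∈ argmin F_μ with x = x_{μφ}(z) = x_{μg}(z). -/

import Mathlib

open scoped RealInnerProductSpace

noncomputable section

/-- `ℝⁿ` with the Euclidean norm. -/
abbrev En (n : ℕ) := EuclideanSpace ℝ (Fin n)

/-- `φ` is proper: finite somewhere and never `⊥`. -/
def ProperE {n : ℕ} (φ : En n → EReal) : Prop :=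
  (∃ x, φ x ≠ ⊤) ∧ ∀ x, φ x ≠ ⊥

/-- `φ` is `m`-weakly convex: `x ↦ φ x + (m/2)‖x‖²` is convex. -/
def WeaklyConvexOn {n : ℕ} (φ : En n → EReal) (m : ℝ) : Prop :=
  ∀ x y : En n, ∀ a b : ℝ, 0 ≤ a → 0 ≤ b → a + b = 1 →
    φ (a • x + b • y) + (((m / 2) * ‖a • x + b • y‖ ^ 2 : ℝ) : EReal) ≤
      (a : EReal) * (φ x + (((m / 2) * ‖x‖ ^ 2 : ℝ) : EReal)) +
        (b : EReal) * (φ y + (((m / 2) * ‖y‖ ^ 2 : ℝ) : EReal))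

/-- `Mφ` is the Moreau envelope of `φ` with parameter `μ` and `xφ` the associated
(unique) proximal mapping. -/
def IsMoreau {n : ℕ} (φ : En n → EReal) (μ : ℝ) (Mφ : En n → ℝ) (xφ : En n → En n) : Prop :=
  ∀ z : En n,
    (Mφ z : EReal) = φ (xφ z) + ((‖xφ z - z‖ ^ 2 / (2 * μ) : ℝ) : EReal) ∧
    (∀ x, (Mφ z : EReal) ≤ φ x + ((‖x - z‖ ^ 2 / (2 * μ) : ℝ) : EReal)) ∧
    (∀ x, φ x + ((‖x - z‖ ^ 2 / (2 * μ) : ℝ) : EReal) = (Mφ z : EReal) → x = xφ z)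

/-- Real-valued version, for the convex function `g`. -/
def IsMoreauR {n : ℕ} (g : En n → ℝ) (μ : ℝ) (Mg : En n → ℝ) (xg : En n → En n) : Prop :=
  ∀ z : En n,
    Mg z = g (xg z) + ‖xg z - z‖ ^ 2 / (2 * μ) ∧
    (∀ x, Mg z ≤ g x + ‖x - z‖ ^ 2 / (2 * μ)) ∧
    (∀ x, g x + ‖x - z‖ ^ 2 / (2 * μ) = Mg z → x = xg z)

/-- `ξ ∈ ∂g(x)` for a (finite-valued) convex function `g`. -/
def ConvexSubgradAt {n : ℕ} (g : En n → ℝ) (ξ x : En n) : Prop :=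
  ∀ y, g x + ⟪ξ, y - x⟫ ≤ g y

/-- `ξ ∈ ∂φ(x)` for an `m`-weakly convex `φ`: `ξ + m x` is a subgradient of the
convex function `φ + (m/2)‖·‖²` at `x`. -/
def WeakSubgradAt {n : ℕ} (φ : En n → EReal) (m : ℝ) (ξ x : En n) : Prop :=
  ∀ y, φ x + (((m / 2) * ‖x‖ ^ 2 + ⟪ξ + m • x, y - x⟫ : ℝ) : EReal) ≤
    φ y + (((m / 2) * ‖y‖ ^ 2 : ℝ) : EReal)

lemma exists_subgrad {n : ℕ} {g : En n → ℝ} (hg : ConvexOn ℝ Set.univ g) (x : En n) :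
    ∃ ξ : En n, ConvexSubgradAt g ξ x := by
  have hcont : Continuous g := by
    have h := hg.continuousOn isOpen_univ
    exact continuousOn_univ.mp h
  set s : Set (En n × ℝ) := {p | g p.1 < p.2} with hs
  have hsconv : Convex ℝ s := by
    rintro ⟨p1, p2⟩ hp ⟨q1, q2⟩ hq a b ha hb hab
    simp only [hs, Set.mem_setOf_eq] at hp hq ⊢
    have h1 := hg.2 (Set.mem_univ p1) (Set.mem_univ q1) ha hb hab
    have h2 : a * g p1 + b * g q1 < a * p2 + b * q2 := by
      rcases lt_or_eq_of_le ha with ha' | ha'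
      · have : a * g p1 < a * p2 := by nlinarith
        have : b * g q1 ≤ b * q2 := by nlinarith
        nlinarith
      · have hb' : b = 1 := by linarith
        rw [← ha', hb']; simpa using hq
    calc g (a • p1 + b • q1) ≤ a * g p1 + b * g q1 := by simpa using h1
    _ < _ := h2
  have hsopen : IsOpen s := isOpen_lt (hcont.comp continuous_fst) continuous_snd
  have hxns : ((x, g x) : En n × ℝ) ∉ s := by simp [hs]
  obtain ⟨f, hf⟩ := geometric_hahn_banach_open_point hsconv hsopen hxns
  set c : ℝ := f (0, 1) with hc
  have hdecomp : ∀ (y : En n) (t : ℝ), f (y, t) = f (y, 0) + t * c := by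
    intro y t
    have : ((y, t) : En n × ℝ) = (y, 0) + t • ((0 : En n), (1 : ℝ)) := by
      simp [Prod.ext_iff]
    rw [this, map_add, map_smul, smul_eq_mul, hc]
  have hcneg : c < 0 := by
    have h1 := hf (x, g x + 1) (by simp [hs])
    rw [hdecomp x (g x + 1), hdecomp x (g x)] at h1
    linarith
  have key : ∀ y : En n, f (y, 0) + g y * c ≤ f (x, 0) + g x * c := by
    intro y
    by_contra hcon
    push_neg at hcon
    set ε : ℝ := (f (y, 0) + g y * c - (f (x, 0) + g x * c)) / (-c) with hε
    have hεpos : 0 < ε := by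
      apply div_pos; linarith; linarith
    have h1 := hf (y, g y + ε) (by simp [hs]; linarith)
    rw [hdecomp y (g y + ε), hdecomp x (g x)] at h1
    have : ε * (-c) = f (y, 0) + g y * c - (f (x, 0) + g x * c) := by
      rw [hε]; exact div_mul_cancel₀ _ (by linarith)
    nlinarith
  refine ⟨(InnerProductSpace.toDual ℝ (En n)).symm
    ((-c)⁻¹ • ((f.comp (ContinuousLinearMap.inl ℝ (En n) ℝ)))), ?_⟩
  intro y
  rw [InnerProductSpace.toDual_symm_apply]
  have := key y
  simp only [ContinuousLinearMap.smul_apply, ContinuousLinearMap.comp_apply,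
    ContinuousLinearMap.inl_apply, smul_eq_mul, map_sub]
  have hkc : 0 < -c := by linarith
  have hd : (-c)⁻¹ * (-c) = 1 := inv_mul_cancel₀ hkc.ne'
  have hstep : (-c)⁻¹ * (f (y, 0) - f (x, 0)) ≤ (-c)⁻¹ * ((g x - g y) * c) :=
    mul_le_mul_of_nonneg_left (by nlinarith) (inv_nonneg.mpr hkc.le)
  have heq : (-c)⁻¹ * ((g x - g y) * c) = g y - g x := by
    field_simp
    rw [mul_div_cancel_left₀ _ hcneg.ne]
    ring
  rw [heq] at hstep
  nlinarith [hstep]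

private lemma ereal_shift {a : EReal} {r c : ℝ} (hbot : a ≠ ⊥)
    (h : (r : EReal) = a + (c : EReal)) : a = ((r - c : ℝ) : EReal) := by
  have htop : a ≠ ⊤ := by
    rintro rfl
    rw [EReal.top_add_coe] at h
    exact EReal.coe_ne_top r h
  obtain ⟨ar, rfl⟩ : ∃ p : ℝ, a = (p : EReal) := ⟨_, (EReal.coe_toReal htop hbot).symm⟩
  rw [← EReal.coe_add, EReal.coe_eq_coe_iff] at h
  rw [EReal.coe_eq_coe_iff]
  linarith


/-- correspondence of global minima of `F = φ - g` and `F_μ`,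
and `min F_μ = F*`. -/
theorem stmt6 {n : ℕ} (φ : En n → EReal) (g : En n → ℝ) (mφ μ : ℝ)
    (hproper : ProperE φ) (hlsc : LowerSemicontinuous φ)
    (hmφ : 0 ≤ mφ) (hweak : WeaklyConvexOn φ mφ)
    (hg : ConvexOn ℝ Set.univ g)
    (hμ : 0 < μ) (hμm : μ * mφ < 1)
    (Fstar : ℝ)
    (hmin : ∃ xs : En n, φ xs - ((g xs : ℝ) : EReal) = (Fstar : EReal) ∧
      ∀ x, (Fstar : EReal) ≤ φ x - ((g x : ℝ) : EReal))
    (Mφ : En n → ℝ) (xφ : En n → En n) (hφprox : IsMoreau φ μ Mφ xφ)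
    (Mg : En n → ℝ) (xg : En n → En n) (hgprox : IsMoreauR g μ Mg xg) :
    (∀ z : En n, Fstar ≤ Mφ z - Mg z) ∧
    (∃ z : En n, (∀ w, Mφ z - Mg z ≤ Mφ w - Mg w) ∧ Mφ z - Mg z = Fstar) ∧
    (∀ z : En n, (∀ w, Mφ z - Mg z ≤ Mφ w - Mg w) →
      ∀ x, φ (xφ z) - ((g (xφ z) : ℝ) : EReal) ≤ φ x - ((g x : ℝ) : EReal)) ∧
    (∀ x : En n, (∀ y, φ x - ((g x : ℝ) : EReal) ≤ φ y - ((g y : ℝ) : EReal)) →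
      ∃ z : En n, (∀ w, Mφ z - Mg z ≤ Mφ w - Mg w) ∧ x = xφ z ∧ x = xg z) := by
  obtain ⟨xs, hxs, hlb⟩ := hmin
  have hbot := hproper.2
  have hφval : ∀ z : En n, φ (xφ z) = ((Mφ z - ‖xφ z - z‖ ^ 2 / (2 * μ) : ℝ) : EReal) :=
    fun z => ereal_shift (hbot _) (hφprox z).1
  -- Part 1: lower bound
  have part1 : ∀ z : En n, Fstar ≤ Mφ z - Mg z := by
    intro z
    have h2 := hlb (xφ z)
    rw [hφval z, ← EReal.coe_sub, EReal.coe_le_coe_iff] at h2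
    have h3 := (hgprox z).2.1 (xφ z)
    linarith
  -- the value of `φ` at a minimizer of `F`
  have hval : ∀ x : En n, (∀ y, φ x - ((g x : ℝ) : EReal) ≤ φ y - ((g y : ℝ) : EReal)) →
      φ x = ((Fstar + g x : ℝ) : EReal) := by
    intro x hx
    have h1 := hlb x
    have h2 : φ x - ((g x : ℝ) : EReal) ≤ (Fstar : EReal) := by
      have := hx xs; rwa [hxs] at this
    have htop : φ x ≠ ⊤ := by
      intro h
      rw [h, EReal.top_sub_coe] at h2
      exact (EReal.coe_ne_top Fstar) (top_le_iff.mp h2)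
    obtain ⟨px, hpx⟩ : ∃ p : ℝ, φ x = (p : EReal) := ⟨_, (EReal.coe_toReal htop (hbot x)).symm⟩
    rw [hpx, ← EReal.coe_sub, EReal.coe_le_coe_iff] at h1 h2
    rw [hpx, EReal.coe_eq_coe_iff]
    linarith
  -- the key construction: for `x ∈ argmin F` produce `z` with `x = xφ z = xg z`, `F_μ z = F*`
  have hcons : ∀ x : En n, (∀ y, φ x - ((g x : ℝ) : EReal) ≤ φ y - ((g y : ℝ) : EReal)) →
      ∃ z : En n, x = xφ z ∧ x = xg z ∧ Mφ z - Mg z = Fstar := by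
    intro x hx
    obtain ⟨ξ, hξ⟩ := exists_subgrad hg x
    have hpx := hval x hx
    set z : En n := x + μ • ξ with hzdef
    have hxz2 : ‖x - z‖ ^ 2 = μ ^ 2 * ‖ξ‖ ^ 2 := by
      have hxz : x - z = -(μ • ξ) := by rw [hzdef]; abel
      rw [hxz, norm_neg, norm_smul, mul_pow, Real.norm_eq_abs, sq_abs]
    have hyz : ∀ y : En n, ‖y - z‖ ^ 2
        = ‖y - x‖ ^ 2 - 2 * μ * ⟪ξ, y - x⟫ + μ ^ 2 * ‖ξ‖ ^ 2 := by
      intro y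
      have h1 : y - z = (y - x) - μ • ξ := by rw [hzdef]; abel
      rw [h1, norm_sub_sq_real, real_inner_smul_right, real_inner_comm, norm_smul,
        Real.norm_eq_abs, mul_pow, sq_abs]
      ring
    have harith : ∀ t s : ℝ, (s - 2 * μ * t + μ ^ 2 * ‖ξ‖ ^ 2) / (2 * μ)
        = s / (2 * μ) - t + μ ^ 2 * ‖ξ‖ ^ 2 / (2 * μ) := by
      intro t s; field_simp
    -- the `g` side
    have hgle : ∀ y : En n, g x + ‖x - z‖ ^ 2 / (2 * μ) ≤ g y + ‖y - z‖ ^ 2 / (2 * μ) := by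
      intro y
      have h1 := hξ y
      have h2 : 0 ≤ ‖y - x‖ ^ 2 / (2 * μ) := by positivity
      rw [hxz2, hyz y, harith]
      linarith
    have hMgz : Mg z = g x + ‖x - z‖ ^ 2 / (2 * μ) := by
      refine le_antisymm ((hgprox z).2.1 x) ?_
      rw [(hgprox z).1]; exact hgle (xg z)
    have hxg : x = xg z := (hgprox z).2.2 x hMgz.symm
    -- the `φ` side
    have hφle : ∀ y : En n, φ x + ((‖x - z‖ ^ 2 / (2 * μ) : ℝ) : EReal) ≤
        φ y + ((‖y - z‖ ^ 2 / (2 * μ) : ℝ) : EReal) := by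
      intro y
      by_cases hty : φ y = ⊤
      · rw [hty, EReal.top_add_coe]; exact le_top
      obtain ⟨py, hpy⟩ : ∃ p : ℝ, φ y = (p : EReal) := ⟨_, (EReal.coe_toReal hty (hbot y)).symm⟩
      have h1 := hlb y
      rw [hpy, ← EReal.coe_sub, EReal.coe_le_coe_iff] at h1
      have h2 := hξ y
      have h3 : 0 ≤ ‖y - x‖ ^ 2 / (2 * μ) := by positivity
      rw [hpx, hpy, ← EReal.coe_add, ← EReal.coe_add, EReal.coe_le_coe_iff, hxz2, hyz y, harith]
      linarith
    have hMφz : (Mφ z : EReal) = φ x + ((‖x - z‖ ^ 2 / (2 * μ) : ℝ) : EReal) := by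
      refine le_antisymm ((hφprox z).2.1 x) ?_
      rw [(hφprox z).1]; exact hφle (xφ z)
    have hxφ : x = xφ z := (hφprox z).2.2 x hMφz.symm
    have hMφr : Mφ z = Fstar + g x + ‖x - z‖ ^ 2 / (2 * μ) := by
      rw [hpx, ← EReal.coe_add] at hMφz
      have := EReal.coe_eq_coe_iff.mp hMφz
      linarith
    exact ⟨z, hxφ, hxg, by rw [hMφr, hMgz]; ring⟩
  have hxsmin : ∀ y, φ xs - ((g xs : ℝ) : EReal) ≤ φ y - ((g y : ℝ) : EReal) := by
    intro y; rw [hxs]; exact hlb y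
  obtain ⟨z0, -, -, hz0v⟩ := hcons xs hxsmin
  refine ⟨part1, ⟨z0, fun w => by rw [hz0v]; exact part1 w, hz0v⟩, ?_, ?_⟩
  · -- Part 3
    intro z hzmin x
    have hFz : Mφ z - Mg z ≤ Fstar := by
      calc Mφ z - Mg z ≤ Mφ z0 - Mg z0 := hzmin z0
      _ = Fstar := hz0v
    have h3 := (hgprox z).2.1 (xφ z)
    have h4 : φ (xφ z) - ((g (xφ z) : ℝ) : EReal) ≤ (Fstar : EReal) := by
      rw [hφval z, ← EReal.coe_sub, EReal.coe_le_coe_iff]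
      linarith
    exact h4.trans (hlb x)
  · -- Part 4
    intro x hx
    obtain ⟨z, h1, h2, h3⟩ := hcons x hx
    exact ⟨z, fun w => by rw [h3]; exact part1 w, h1, h2⟩
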